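/- Let R be a Noetherian commutative ring and J ⊆ I ideals of R such that: (i) the ideal I/J of R/J has relation type at most ℓ, and (ii) J ∩ I^t = J·I^{t−1} for every t ≤ ℓ. Then J ∩ I^t = J·I^{t−1} for every t ≥ 1; equivalently, the surjection 𝒜_{R↠R/J}(I/J) ↠ Rees_{R/J}(I/J) is an isomorphism. -/

import Mathlib

open Polynomial

/-- The presentation `A[T₁,…,Tₙ] → Rees_A(I)`, `Tᵢ ↦ fᵢ·u`, attached to a family of
elements of `I`. -/
noncomputable def reesPres {A : Type*} [CommRing A] (I : Ideal A) {n : ℕ}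
    (f : Fin n → A) (hf : ∀ i, f i ∈ I) :
    MvPolynomial (Fin n) A →ₐ[A] reesAlgebra I :=
  MvPolynomial.aeval fun i =>
    (⟨Polynomial.C (f i) * Polynomial.X, by
      rw [Polynomial.C_mul_X_eq_monomial]
      exact reesAlgebra.monomial_mem.mpr (by simpa using hf i)⟩ : reesAlgebra I)

/-- An ideal `I` of `A` has relation type at most `ℓ` if, for every (equivalently, some)
finite generating family of `I`, the kernel of the presentation `A[T] ↠ Rees_A(I)` is
generated by its homogeneous elements of degrees `≤ ℓ`. -/
def HasRelationTypeLE (A : Type*) [CommRing A] (I : Ideal A) (ℓ : ℕ) : Prop :=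
  ∀ (n : ℕ) (f : Fin n → A) (hf : ∀ i, f i ∈ I),
    Ideal.span (Set.range f) = I →
    RingHom.ker (reesPres I f hf : MvPolynomial (Fin n) A →+* reesAlgebra I) =
      Ideal.span {F : MvPolynomial (Fin n) A |
        F ∈ RingHom.ker (reesPres I f hf : MvPolynomial (Fin n) A →+* reesAlgebra I) ∧
        ∃ d ≤ ℓ, F.IsHomogeneous d}



section Aux
variable {R : Type*} [CommRing R]

lemma aux_prod_pow_mem {I : Ideal R} {ι : Type*} [DecidableEq ι] (s : Finset ι)
    {f : ι → R} (hf : ∀ i, f i ∈ I) (m : ι → ℕ) :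
    (∏ i ∈ s, f i ^ m i) ∈ I ^ (∑ i ∈ s, m i) := by
  induction s using Finset.induction with
  | empty => simp
  | @insert _ _ h ih =>
    rw [Finset.prod_insert h, Finset.sum_insert h, pow_add]
    exact Ideal.mul_mem_mul (Ideal.pow_mem_pow (hf _) _) ih

lemma aux_eval_mem_pow {I : Ideal R} {n : ℕ} {f : Fin n → R}
    (hf : ∀ i, f i ∈ I) {F : MvPolynomial (Fin n) R} {d : ℕ} (hF : F.IsHomogeneous d) :
    MvPolynomial.eval f F ∈ I ^ d := by
  rw [MvPolynomial.eval_eq]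
  refine Ideal.sum_mem _ fun m hm => ?_
  have hdeg : (∑ i ∈ m.support, m i) = d := by
    have := hF (MvPolynomial.mem_support_iff.mp hm)
    simpa [Finsupp.weight_apply, Finsupp.sum] using this
  rw [← hdeg]
  exact Ideal.mul_mem_left _ _ (aux_prod_pow_mem _ hf _)

lemma aux_aeval_C_mul_X {n : ℕ} (g : Fin n → R)
    {F : MvPolynomial (Fin n) R} {d : ℕ} (hF : F.IsHomogeneous d) :
    MvPolynomial.aeval (fun i => Polynomial.C (g i) * Polynomial.X) F
      = Polynomial.C (MvPolynomial.eval g F) * Polynomial.X ^ d := by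
  conv_lhs => rw [F.as_sum]
  conv_rhs => rw [F.as_sum]
  rw [map_sum, map_sum, map_sum, Finset.sum_mul]
  refine Finset.sum_congr rfl fun m hm => ?_
  have hdeg : (∑ i ∈ m.support, m i) = d := by
    have := hF (MvPolynomial.mem_support_iff.mp hm)
    simpa [Finsupp.weight_apply, Finsupp.sum] using this
  rw [MvPolynomial.aeval_monomial, MvPolynomial.eval_monomial]
  simp only [Finsupp.prod, mul_pow, Finset.prod_mul_distrib, Finset.prod_pow_eq_pow_sum]
  rw [hdeg]
  rw [Polynomial.algebraMap_eq]
  simp only [map_mul, map_prod, map_pow]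
  ring

end Aux

section Aux2
variable {R : Type*} [CommRing R]

lemma aux_mem_ker_iff {I : Ideal R} {n : ℕ} {f : Fin n → R} (hf : ∀ i, f i ∈ I)
    {F : MvPolynomial (Fin n) R} {d : ℕ} (hF : F.IsHomogeneous d) :
    F ∈ RingHom.ker (reesPres I f hf : MvPolynomial (Fin n) R →+* reesAlgebra I) ↔
      MvPolynomial.eval f F = 0 := by
  rw [RingHom.mem_ker]
  have hcoe : ((reesPres I f hf F : reesAlgebra I) : R[X])
      = Polynomial.C (MvPolynomial.eval f F) * Polynomial.X ^ d := by
    show (reesAlgebra I).val (MvPolynomial.aeval _ F) = _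
    rw [MvPolynomial.comp_aeval_apply]
    exact aux_aeval_C_mul_X f hF
  constructor
  · intro h
    have : ((reesPres I f hf F : reesAlgebra I) : R[X]) = 0 := by
      rw [show (reesPres I f hf : MvPolynomial (Fin n) R →+* reesAlgebra I) F
        = reesPres I f hf F from rfl] at h
      rw [h]; rfl
    rw [hcoe, Polynomial.C_mul_X_pow_eq_monomial] at this
    exact (Polynomial.monomial_eq_zero_iff _ _).mp this
  · intro h
    have : ((reesPres I f hf F : reesAlgebra I) : R[X]) = 0 := by
      rw [hcoe, h]; simp
    exact Subtype.ext this

end Aux2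

section Aux3
variable {R : Type*} [CommRing R]

lemma aux_lift_homog (J : Ideal R) {n d : ℕ} {g : MvPolynomial (Fin n) (R ⧸ J)}
    (hg : g.IsHomogeneous d) :
    ∃ G : MvPolynomial (Fin n) R, G.IsHomogeneous d ∧
      MvPolynomial.map (Ideal.Quotient.mk J) G = g := by
  choose lift hlift using Ideal.Quotient.mk_surjective (I := J)
  refine ⟨∑ m ∈ g.support, MvPolynomial.monomial m (lift (g.coeff m)), ?_, ?_⟩
  · refine MvPolynomial.IsHomogeneous.sum _ _ _ fun m hm => ?_
    refine MvPolynomial.isHomogeneous_monomial _ ?_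
    have := hg (MvPolynomial.mem_support_iff.mp hm)
    simpa [Finsupp.degree_apply, Finsupp.weight_apply, Finsupp.sum] using this
  · rw [map_sum]
    simp only [MvPolynomial.map_monomial, hlift]
    exact g.as_sum.symm

lemma aux_homogComp_mul {σ : Type*} (c G : MvPolynomial σ R) {d t : ℕ}
    (hG : G.IsHomogeneous d) (hdt : d ≤ t) :
    MvPolynomial.homogeneousComponent t (c * G)
      = MvPolynomial.homogeneousComponent (t - d) c * G := by
  conv_lhs => rw [← c.sum_homogeneousComponent]
  rw [Finset.sum_mul, map_sum]
  have key : ∀ k, MvPolynomial.homogeneousComponent t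
      (MvPolynomial.homogeneousComponent k c * G)
      = if k = t - d then MvPolynomial.homogeneousComponent k c * G else 0 := by
    intro k
    rw [MvPolynomial.homogeneousComponent_of_mem
      ((MvPolynomial.mem_homogeneousSubmodule _ _).mpr
        ((MvPolynomial.homogeneousComponent_isHomogeneous k c).mul hG))]
    have hiff : (t = k + d) ↔ (k = t - d) := by omega
    simp only [hiff]
  simp_rw [key]
  rw [Finset.sum_ite_eq' (Finset.range (c.totalDegree + 1))]
  split_ifs with h
  · rfl
  · rw [MvPolynomial.homogeneousComponent_eq_zero, zero_mul]
    simp only [Finset.mem_range, not_lt] at h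
    omega

lemma aux_exists_homog {n : ℕ} (f : Fin n → R) :
    ∀ (t : ℕ) (x : R), x ∈ (Ideal.span (Set.range f)) ^ t →
      ∃ F : MvPolynomial (Fin n) R, F.IsHomogeneous t ∧ MvPolynomial.eval f F = x := by
  intro t
  induction t with
  | zero => exact fun x _ => ⟨MvPolynomial.C x, MvPolynomial.isHomogeneous_C _ _, by simp⟩
  | succ t ih =>
    intro x hx
    rw [pow_succ] at hx
    refine Submodule.mul_induction_on hx ?_ ?_
    · intro a ha b hb
      obtain ⟨F, hF, hFa⟩ := ih a ha
      obtain ⟨c, hc⟩ := (Submodule.mem_span_range_iff_exists_fun R).mp hb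
      refine ⟨F * ∑ i, MvPolynomial.C (c i) * MvPolynomial.X i, ?_, ?_⟩
      · exact hF.mul (MvPolynomial.IsHomogeneous.sum _ _ _ fun i _ =>
          MvPolynomial.isHomogeneous_C_mul_X _ _)
      · rw [map_mul, hFa, map_sum]
        simp only [map_mul, MvPolynomial.eval_C, MvPolynomial.eval_X]
        rw [show (∑ i, c i * f i) = b from by simpa [smul_eq_mul] using hc]
    · rintro p q ⟨F, hF, hFp⟩ ⟨G, hG, hGq⟩
      exact ⟨F + G, hF.add hG, by rw [map_add, hFp, hGq]⟩

end Aux3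


section Aux4
variable {R : Type*} [CommRing R]

lemma aux_eval_map {S : Type*} [CommRing S] (φ : R →+* S) {n : ℕ} (f : Fin n → R)
    (F : MvPolynomial (Fin n) R) :
    MvPolynomial.eval (fun i => φ (f i)) (MvPolynomial.map φ F)
      = φ (MvPolynomial.eval f F) := by
  rw [MvPolynomial.eval_map,
    show MvPolynomial.eval f F = MvPolynomial.eval₂ (RingHom.id R) f F from rfl,
    MvPolynomial.eval₂_comp_left]
  simp [Function.comp_def]

lemma aux_evalP {I J : Ideal R} {n : ℕ} {f : Fin n → R} (hfI : ∀ i, f i ∈ I)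
    {P : MvPolynomial (Fin n) R} (hcoeff : ∀ m, P.coeff m ∈ J) {t : ℕ}
    (hP : P.IsHomogeneous t) (ht : 1 ≤ t) :
    MvPolynomial.eval f P ∈ J * I ^ (t - 1) := by
  rw [MvPolynomial.eval_eq]
  refine Ideal.sum_mem _ fun m hm => ?_
  have hdeg : (∑ i ∈ m.support, m i) = t := by
    have := hP (MvPolynomial.mem_support_iff.mp hm)
    simpa [Finsupp.weight_apply, Finsupp.sum] using this
  refine Ideal.mul_mem_mul (hcoeff m) ?_
  have h2 : (∏ i ∈ m.support, f i ^ m i) ∈ I ^ t := hdeg ▸ aux_prod_pow_mem _ hfI _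
  exact Ideal.pow_le_pow_right (by omega) h2

end Aux4

set_option maxHeartbeats 1000000 in
/-- let `J ⊆ I` be ideals of a Noetherian ring `R` such that `I/J` has
relation type at most `ℓ` over `R/J` and `J ∩ I^t = J·I^{t−1}` for every `1 ≤ t ≤ ℓ`.
Then `J ∩ I^t = J·I^{t−1}` for every `t ≥ 1`; that is, the surjection
`𝒜_{R↠R/J}(I/J) ↠ Rees_{R/J}(I/J)` is an isomorphism. -/
theorem aluffi_to_rees_iso_of_relation_type {R : Type*} [CommRing R] [IsNoetherianRing R]
    (I J : Ideal R) (hJI : J ≤ I) (ℓ : ℕ)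
    (hrel : HasRelationTypeLE (R ⧸ J) (I.map (Ideal.Quotient.mk J)) ℓ)
    (hlow : ∀ t : ℕ, 1 ≤ t → t ≤ ℓ → J ⊓ I ^ t = J * I ^ (t - 1)) :
    ∀ t : ℕ, 1 ≤ t → J ⊓ I ^ t = J * I ^ (t - 1) := by
  intro t ht
  refine le_antisymm ?_ (le_inf Ideal.mul_le_left ?_)
  swap
  · calc J * I ^ (t - 1) ≤ I * I ^ (t - 1) := Ideal.mul_mono_left hJI
      _ = I ^ t := by rw [← pow_succ']; congr 1; omega
  by_cases htl : t ≤ ℓ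
  · exact (hlow t ht htl).le
  push_neg at htl
  intro x hx
  rw [Submodule.mem_inf] at hx
  obtain ⟨hxJ, hxI⟩ := hx
  classical
  -- generators of I
  obtain ⟨n, f, hfspan⟩ :=
    Submodule.fg_iff_exists_fin_generating_family.mp (IsNoetherian.noetherian I)
  have hfspan : Ideal.span (Set.range f) = I := hfspan
  have hfI : ∀ i, f i ∈ I := fun i => hfspan ▸ Ideal.subset_span ⟨i, rfl⟩
  set mk := Ideal.Quotient.mk J with hmk
  set fb : Fin n → R ⧸ J := fun i => mk (f i) with hfb_def
  have hfb : ∀ i, fb i ∈ I.map mk := fun i => Ideal.mem_map_of_mem _ (hfI i)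
  have hspanb : Ideal.span (Set.range fb) = I.map mk := by
    rw [← hfspan, Ideal.map_span]
    congr 1
    exact Set.range_comp (⇑mk) f
  have hker := hrel n fb hfb hspanb
  -- a homogeneous polynomial presenting x
  obtain ⟨F, hFhom, hFeval⟩ := aux_exists_homog f t x (hfspan ▸ hxI)
  set Fb : MvPolynomial (Fin n) (R ⧸ J) := MvPolynomial.map mk F with hFb_def
  have hFbhom : Fb.IsHomogeneous t := hFhom.map mk
  have hFbeval : MvPolynomial.eval fb Fb = 0 := by
    rw [hFb_def, aux_eval_map mk f F, hFeval]
    exact Ideal.Quotient.eq_zero_iff_mem.mpr hxJ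
  have hFbker : Fb ∈ RingHom.ker
      (reesPres (I.map mk) fb hfb : MvPolynomial (Fin n) (R ⧸ J) →+* reesAlgebra (I.map mk)) :=
    (aux_mem_ker_iff hfb hFbhom).mpr hFbeval
  rw [hker] at hFbker
  obtain ⟨c, hcsupp, hcsum⟩ := Submodule.mem_span_set.mp hFbker
  -- choose degrees for the homogeneous kernel generators
  have hprop : ∀ g : MvPolynomial (Fin n) (R ⧸ J), ∃ d : ℕ,
      g ∈ c.support → d ≤ ℓ ∧ g.IsHomogeneous d ∧ MvPolynomial.eval fb g = 0 := by
    intro g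
    by_cases hg : g ∈ c.support
    · obtain ⟨hgker, d, hdl, hghom⟩ := hcsupp hg
      exact ⟨d, fun _ => ⟨hdl, hghom, (aux_mem_ker_iff hfb hghom).mp hgker⟩⟩
    · exact ⟨0, fun h => absurd h hg⟩
  choose dd hdd using hprop
  -- homogeneous lifts of the kernel generators
  have hlift : ∀ g : MvPolynomial (Fin n) (R ⧸ J), ∃ G : MvPolynomial (Fin n) R,
      g ∈ c.support → (G.IsHomogeneous (dd g) ∧ MvPolynomial.map mk G = g) := by
    intro g
    by_cases hg : g ∈ c.support
    · obtain ⟨G, hG1, hG2⟩ := aux_lift_homog J (hdd g hg).2.1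
      exact ⟨G, fun _ => ⟨hG1, hG2⟩⟩
    · exact ⟨0, fun h => absurd h hg⟩
  choose GG hGG using hlift
  -- arbitrary lifts of the coefficients
  choose CC hCC using MvPolynomial.map_surjective mk Ideal.Quotient.mk_surjective
  -- the error term P has coefficients in J
  set P : MvPolynomial (Fin n) R := F - ∑ g ∈ c.support, CC (c g) * GG g with hP_def
  have hPmap : MvPolynomial.map mk P = 0 := by
    rw [hP_def, map_sub, map_sum, ← hFb_def, ← hcsum, Finsupp.sum]
    rw [sub_eq_zero]
    refine Finset.sum_congr rfl fun g hg => ?_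
    rw [map_mul, hCC (c g), (hGG g hg).2, smul_eq_mul]
  have hPcoeff : ∀ m, P.coeff m ∈ J := by
    intro m
    have := congrArg (MvPolynomial.coeff m) hPmap
    rw [MvPolynomial.coeff_map, hmk] at this
    exact Ideal.Quotient.eq_zero_iff_mem.mp this
  -- decompose F using degree-t homogeneous components
  have hFdecomp : F = (∑ g ∈ c.support,
      MvPolynomial.homogeneousComponent (t - dd g) (CC (c g)) * GG g)
      + MvPolynomial.homogeneousComponent t P := by
    have h1 : F = (∑ g ∈ c.support, CC (c g) * GG g) + P := by rw [hP_def]; ring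
    have h2 : MvPolynomial.homogeneousComponent t F = F := by
      rw [MvPolynomial.homogeneousComponent_of_mem
        ((MvPolynomial.mem_homogeneousSubmodule _ _).mpr hFhom), if_pos rfl]
    calc F = MvPolynomial.homogeneousComponent t F := h2.symm
      _ = MvPolynomial.homogeneousComponent t ((∑ g ∈ c.support, CC (c g) * GG g) + P) := by
          rw [← h1]
      _ = _ := by
          rw [map_add, map_sum]
          congr 1
          refine Finset.sum_congr rfl fun g hg => ?_
          exact aux_homogComp_mul (CC (c g)) (GG g) (hGG g hg).1
            (le_of_lt (lt_of_le_of_lt (hdd g hg).1 htl))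
  -- conclude
  rw [← hFeval, hFdecomp, map_add, map_sum]
  refine Ideal.add_mem _ (Ideal.sum_mem _ fun g hg => ?_) ?_
  · rw [map_mul]
    have hd_le : dd g ≤ t := le_of_lt (lt_of_le_of_lt (hdd g hg).1 htl)
    have h1 : MvPolynomial.eval f (MvPolynomial.homogeneousComponent (t - dd g) (CC (c g)))
        ∈ I ^ (t - dd g) :=
      aux_eval_mem_pow hfI (MvPolynomial.homogeneousComponent_isHomogeneous _ _)
    have h2J : MvPolynomial.eval f (GG g) ∈ J := by
      rw [← Ideal.Quotient.eq_zero_iff_mem]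
      rw [← aux_eval_map mk f (GG g)] at *
      rw [show (fun i => mk (f i)) = fb from rfl, (hGG g hg).2]
      exact (hdd g hg).2.2
    have h2I : MvPolynomial.eval f (GG g) ∈ I ^ (dd g) :=
      aux_eval_mem_pow hfI (hGG g hg).1
    rcases Nat.eq_zero_or_pos (dd g) with hd0 | hd1
    · have h1' : MvPolynomial.eval f (MvPolynomial.homogeneousComponent (t - dd g) (CC (c g)))
          ∈ I ^ (t - 1) := by
        refine Ideal.pow_le_pow_right (by omega) h1
      rw [mul_comm (MvPolynomial.eval f
        (MvPolynomial.homogeneousComponent (t - dd g) (CC (c g)))) (MvPolynomial.eval f (GG g))]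
      exact Ideal.mul_mem_mul h2J h1'
    · have h2 : MvPolynomial.eval f (GG g) ∈ J * I ^ (dd g - 1) := by
        rw [← hlow (dd g) hd1 (hdd g hg).1]
        exact Submodule.mem_inf.mpr ⟨h2J, h2I⟩
      have := Ideal.mul_mem_mul h1 h2
      have heq : I ^ (t - dd g) * (J * I ^ (dd g - 1)) = J * I ^ (t - 1) := by
        rw [mul_comm (I ^ (t - dd g)), mul_assoc, ← pow_add]
        congr 2
        omega
      rwa [heq] at this
  · exact aux_evalP hfI
      (fun m => by
        rw [MvPolynomial.coeff_homogeneousComponent]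
        split_ifs
        · exact hPcoeff m
        · exact J.zero_mem)
      (MvPolynomial.homogeneousComponent_isHomogeneous t P) ht
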